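/- Let G = (V, E) be a finite simple graph and let x', y be two LP-optimal, half-integral points of the vertex-cover LP of G. Define z : V → ℝ by: z_j = 1 if x'_j = 1, or if x'_j = 1/2 and y_j = 1; z_j = 0 if x'_j = 0, or if x'_j = 1/2 and y_j = 0; and z_j = 1/2 if x'_j = y_j = 1/2. Then z is LP-feasible and ∑_{j∈V} z_j = ∑_{j∈V} x'_j; in particular z is LP-optimal. -/

import Mathlib

def LPFeasible {V : Type*} [Fintype V] (G : SimpleGraph V) (x : V → ℝ) : Prop :=
  (∀ v, 0 ≤ x v ∧ x v ≤ 1) ∧ ∀ u v, G.Adj u v → 1 ≤ x u + x v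

noncomputable def LPValue {V : Type*} [Fintype V] (x : V → ℝ) : ℝ := ∑ v, x v

def LPOptimal {V : Type*} [Fintype V] (G : SimpleGraph V) (x : V → ℝ) : Prop :=
  LPFeasible G x ∧ ∀ y : V → ℝ, LPFeasible G y → LPValue x ≤ LPValue y

def HalfIntegral {V : Type*} (x : V → ℝ) : Prop :=
  ∀ v, x v = 0 ∨ x v = 1/2 ∨ x v = 1

def IsVertexCover {V : Type*} [Fintype V] (G : SimpleGraph V) (C : Finset V) : Prop :=
  ∀ u v, G.Adj u v → u ∈ C ∨ v ∈ C

open Classical in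
noncomputable def Dfun (a c : ℝ) : ℝ :=
  (if a = 1/2 ∧ c = 1 then 1 else 0) - (if a = 1/2 ∧ c = 0 then 1 else 0)

lemma Dfun_bnd (a c : ℝ) : -1 ≤ Dfun a c ∧ Dfun a c ≤ 1 := by
  unfold Dfun; split_ifs <;> norm_num

lemma point_key (a c : ℝ) (ha : a = 0 ∨ a = 1/2 ∨ a = 1) (hc : c = 0 ∨ c = 1/2 ∨ c = 1) :
    (0 ≤ a + (1/2) * Dfun a c ∧ a + (1/2) * Dfun a c ≤ 1) ∧
    (0 ≤ (a + c)/2 + (1/8) * Dfun a c ∧ (a + c)/2 + (1/8) * Dfun a c ≤ 1) ∧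
    (0 ≤ (a + c)/2 - (1/8) * Dfun a c ∧ (a + c)/2 - (1/8) * Dfun a c ≤ 1) := by
  rcases ha with rfl | rfl | rfl <;> rcases hc with rfl | rfl | rfl <;> norm_num [Dfun]

lemma edge_key (a b c d : ℝ) (ha : a = 0 ∨ a = 1/2 ∨ a = 1) (hb : b = 0 ∨ b = 1/2 ∨ b = 1)
    (hc : c = 0 ∨ c = 1/2 ∨ c = 1) (hd : d = 0 ∨ d = 1/2 ∨ d = 1)
    (h1 : 1 ≤ a + b) (h2 : 1 ≤ c + d) :
    1 ≤ a + b + (1/2) * (Dfun a c + Dfun b d) ∧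
    (Dfun a c + Dfun b d = 0 ∨ 5/2 ≤ a + b + c + d) := by
  rcases ha with rfl | rfl | rfl <;> rcases hb with rfl | rfl | rfl <;>
    rcases hc with rfl | rfl | rfl <;> rcases hd with rfl | rfl | rfl <;>
    (revert h1 h2; norm_num [Dfun])

/-- Combination of two LP-optimal half-integral points (Picard–Queyranne construction). -/
theorem picard_combination {V : Type*} [Fintype V] (G : SimpleGraph V)
    (x' y z : V → ℝ)
    (hx : LPOptimal G x') (hhx : HalfIntegral x')
    (hy : LPOptimal G y) (hhy : HalfIntegral y)
    (hz1 : ∀ j, (x' j = 1 ∨ (x' j = 1/2 ∧ y j = 1)) → z j = 1)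
    (hz0 : ∀ j, (x' j = 0 ∨ (x' j = 1/2 ∧ y j = 0)) → z j = 0)
    (hzh : ∀ j, (x' j = 1/2 ∧ y j = 1/2) → z j = 1/2) :
    LPFeasible G z ∧ LPValue z = LPValue x' ∧ LPOptimal G z := by
  classical
  obtain ⟨⟨hxb, hxe⟩, hxopt⟩ := hx
  obtain ⟨⟨hyb, hye⟩, hyopt⟩ := hy
  set D : V → ℝ := fun j => Dfun (x' j) (y j) with hD
  have hzval : ∀ j, z j = x' j + (1/2) * D j := by
    intro j
    rcases hhx j with h | h | h
    · rw [hz0 j (Or.inl h)]; simp only [hD, h]; norm_num [Dfun]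
    · rcases hhy j with h2 | h2 | h2
      · rw [hz0 j (Or.inr ⟨h, h2⟩)]; simp only [hD, h, h2]; norm_num [Dfun]
      · rw [hzh j ⟨h, h2⟩]; simp only [hD, h, h2]; norm_num [Dfun]
      · rw [hz1 j (Or.inr ⟨h, h2⟩)]; simp only [hD, h, h2]; norm_num [Dfun]
    · rw [hz1 j (Or.inl h)]; simp only [hD, h]; norm_num [Dfun]
  have hedge : ∀ u v, G.Adj u v → 1 ≤ x' u + x' v + (1/2) * (D u + D v) ∧
      (D u + D v = 0 ∨ 5/2 ≤ x' u + x' v + y u + y v) :=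
    fun u v huv => edge_key _ _ _ _ (hhx u) (hhx v) (hhy u) (hhy v) (hxe u v huv) (hye u v huv)
  have hzfeas : LPFeasible G z := by
    constructor
    · intro v; rw [hzval v]; exact (point_key _ _ (hhx v) (hhy v)).1
    · intro u v huv
      rw [hzval u, hzval v]
      have h := (hedge u v huv).1
      linarith
  have hvxy : LPValue x' = LPValue y :=
    le_antisymm (hxopt y ⟨hyb, hye⟩) (hyopt x' ⟨hxb, hxe⟩)
  have hfp : LPFeasible G (fun j => (x' j + y j)/2 + (1/8) * D j) := by
    constructor
    · intro v; exact (point_key _ _ (hhx v) (hhy v)).2.1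
    · intro u v huv
      have h1 := hxe u v huv; have h2 := hye u v huv
      have hbu := Dfun_bnd (x' u) (y u); have hbv := Dfun_bnd (x' v) (y v)
      rcases (hedge u v huv).2 with h | h
      · simp only [hD] at h ⊢; linarith
      · simp only [hD] at h hbu hbv ⊢; linarith [hbu.1, hbv.1]
  have hfm : LPFeasible G (fun j => (x' j + y j)/2 - (1/8) * D j) := by
    constructor
    · intro v; exact (point_key _ _ (hhx v) (hhy v)).2.2
    · intro u v huv
      have h1 := hxe u v huv; have h2 := hye u v huv
      have hbu := Dfun_bnd (x' u) (y u); have hbv := Dfun_bnd (x' v) (y v)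
      rcases (hedge u v huv).2 with h | h
      · simp only [hD] at h ⊢; linarith
      · simp only [hD] at h hbu hbv ⊢; linarith [hbu.2, hbv.2]
  have sumform : ∀ s : ℝ, (∑ j, ((x' j + y j)/2 + s * D j)) =
      (∑ j, x' j + ∑ j, y j)/2 + s * ∑ j, D j := by
    intro s
    rw [Finset.sum_add_distrib, ← Finset.mul_sum, ← Finset.sum_div, Finset.sum_add_distrib]
  have hDsum : ∑ j, D j = 0 := by
    have e1 := hxopt _ hfp
    have e2 := hxopt _ hfm
    simp only [LPValue] at e1 e2 hvxy
    have s1 : (∑ j, ((x' j + y j)/2 + (1/8) * D j)) =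
        (∑ j, x' j + ∑ j, y j)/2 + (1/8) * ∑ j, D j := sumform (1/8)
    have s2 : (∑ j, ((x' j + y j)/2 - (1/8) * D j)) =
        (∑ j, x' j + ∑ j, y j)/2 + (-(1/8)) * ∑ j, D j := by
      rw [← sumform (-(1/8))]
      congr 1; ext j; ring
    rw [s1] at e1; rw [s2] at e2
    linarith
  have hzv : LPValue z = LPValue x' := by
    simp only [LPValue]
    rw [Finset.sum_congr rfl (fun j _ => hzval j), Finset.sum_add_distrib,
      ← Finset.mul_sum, hDsum]
    ring
  exact ⟨hzfeas, hzv, hzfeas, fun w hw => hzv ▸ hxopt w hw⟩
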